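/- Let $r,t \ge 2$ be integers. Let $G$ be an $r$-graph on $[n]$ that contains no $t$ pairwise disjoint edges and contains no complete $r$-graph on $tr-1$ vertices. If vertices $i,j$ are contained together in some edge of $G$, then $\pi_{ij}(G)$ also contains no complete $r$-graph on $tr-1$ vertices. -/
import Mathlib


open Finset

/-- Lagrangian polynomial: sum over edges of products of weights. -/
def lagPoly (G : Finset (Finset ℕ)) (x : ℕ → ℝ) : ℝ := ∑ e ∈ G, ∏ i ∈ e, x i

/-- A feasible weight vector on `[n] = {1,…,n}`. -/
def IsFeasible (n : ℕ) (x : ℕ → ℝ) : Prop :=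
  (∀ i, 0 ≤ x i) ∧ ∑ i ∈ Finset.Icc 1 n, x i = 1

/-- Lagrangian of a hypergraph on `[n]`. -/
noncomputable def lag (n : ℕ) (G : Finset (Finset ℕ)) : ℝ :=
  sSup {v : ℝ | ∃ x : ℕ → ℝ, IsFeasible n x ∧ lagPoly G x = v}

/-- `G` is an `r`-graph on the vertex set `{1,…,n}`. -/
def IsGraphOn (n r : ℕ) (G : Finset (Finset ℕ)) : Prop :=
  ∀ e ∈ G, e ⊆ Finset.Icc 1 n ∧ e.card = r

/-- The compression `π_{ij}(G)`: each edge `f ∪ {j}` with `f` avoiding `i,j` and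
`f ∪ {i} ∉ G` is replaced by `f ∪ {i}`. -/
def compress (G : Finset (Finset ℕ)) (i j : ℕ) : Finset (Finset ℕ) :=
  (G.filter fun e => ¬(j ∈ e ∧ i ∉ e ∧ insert i (e.erase j) ∉ G)) ∪
  ((G.filter fun e => j ∈ e ∧ i ∉ e ∧ insert i (e.erase j) ∉ G).image
    fun e => insert i (e.erase j))

/-- `G` contains `t` pairwise disjoint edges. -/
def HasMatching (G : Finset (Finset ℕ)) (t : ℕ) : Prop :=
  ∃ M : Finset (Finset ℕ), M ⊆ G ∧ M.card = t ∧
    (M : Set (Finset ℕ)).Pairwise fun e f => Disjoint e f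

/-- `G` contains a complete `r`-graph on `p` vertices. -/
def HasClique (G : Finset (Finset ℕ)) (p r : ℕ) : Prop :=
  ∃ S : Finset ℕ, S.card = p ∧ ∀ e ⊆ S, e.card = r → e ∈ G

lemma exists_disjoint_r_subsets (r : ℕ) (hr : 1 ≤ r) :
    ∀ k (A : Finset ℕ), k * r ≤ A.card →
    ∃ M : Finset (Finset ℕ), M.card = k ∧ (∀ e ∈ M, e ⊆ A ∧ e.card = r) ∧
      (M : Set (Finset ℕ)).Pairwise fun e f => Disjoint e f := by
  intro k
  induction k with
  | zero => intro A _; exact ⟨∅, by simp, by simp, by simp⟩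
  | succ k ih =>
    intro A hk
    have hsm : (k + 1) * r = k * r + r := by ring
    have hrA : r ≤ A.card := by omega
    obtain ⟨e, heA, hec⟩ := Finset.exists_subset_card_eq hrA
    have hsd : k * r ≤ (A \ e).card := by
      rw [Finset.card_sdiff_of_subset heA]; omega
    obtain ⟨M, hMc, hMe, hMp⟩ := ih (A \ e) hsd
    have heM : e ∉ M := by
      intro h
      have hsub : e ⊆ A \ e := (hMe e h).1
      obtain ⟨x, hx⟩ : e.Nonempty := Finset.card_pos.mp (by omega)
      exact (Finset.mem_sdiff.mp (hsub hx)).2 hx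
    refine ⟨insert e M, ?_, ?_, ?_⟩
    · rw [Finset.card_insert_of_notMem heM, hMc]
    · intro f hf
      rcases Finset.mem_insert.mp hf with rfl | hf
      · exact ⟨heA, hec⟩
      · exact ⟨(hMe f hf).1.trans Finset.sdiff_subset, (hMe f hf).2⟩
    · intro a ha b hb hab
      simp only [Finset.coe_insert, Set.mem_insert_iff, Finset.mem_coe] at ha hb
      rcases ha with rfl | ha <;> rcases hb with rfl | hb
      · exact absurd rfl hab
      · exact Finset.disjoint_left.mpr fun x hx hxb =>
          (Finset.mem_sdiff.mp ((hMe b hb).1 hxb)).2 hx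
      · exact Finset.disjoint_left.mpr fun x hx hxb =>
          (Finset.mem_sdiff.mp ((hMe a ha).1 hx)).2 hxb
      · exact hMp ha hb hab

theorem compression_preserves_clique_free (n r t : ℕ) (hr : 2 ≤ r) (ht : 2 ≤ t)
    (G : Finset (Finset ℕ)) (hG : IsGraphOn n r G)
    (hM : ¬HasMatching G t) (hK : ¬HasClique G (t*r - 1) r)
    (i j : ℕ) (he : ∃ e ∈ G, i ∈ e ∧ j ∈ e) :
    ¬HasClique (compress G i j) (t*r - 1) r := by
  rcases eq_or_ne i j with rfl | hij
  · have hGG : compress G i i = G := by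
      unfold compress
      have h1 : (G.filter fun e => ¬(i ∈ e ∧ i ∉ e ∧ insert i (e.erase i) ∉ G)) = G :=
        Finset.filter_true_of_mem (fun e _ => by tauto)
      have h2 : (G.filter fun e => i ∈ e ∧ i ∉ e ∧ insert i (e.erase i) ∉ G) = ∅ :=
        Finset.filter_false_of_mem (fun e _ => by tauto)
      rw [h1, h2]; simp
    rw [hGG]; exact hK
  -- helper facts about membership in compress
  have factA : ∀ e ∈ compress G i j, i ∉ e → e ∈ G := by
    intro e heC hie
    rcases Finset.mem_union.mp heC with h | h
    · exact (Finset.mem_filter.mp h).1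
    · obtain ⟨f, _, rfl⟩ := Finset.mem_image.mp h
      exact absurd (Finset.mem_insert_self i _) hie
  have factC : ∀ e ∈ compress G i j, e ∉ G →
      i ∈ e ∧ j ∉ e ∧ insert j (e.erase i) ∈ G ∧ i ∉ insert j (e.erase i) := by
    intro e heC heG
    rcases Finset.mem_union.mp heC with h | h
    · exact absurd (Finset.mem_filter.mp h).1 heG
    · obtain ⟨f, hf, rfl⟩ := Finset.mem_image.mp h
      obtain ⟨hfG, hjf, hif, _⟩ := Finset.mem_filter.mp hf
      have hifej : i ∉ f.erase j := fun h => hif (Finset.mem_of_mem_erase h)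
      have hje : j ∉ insert i (f.erase j) := by
        intro h
        rcases Finset.mem_insert.mp h with h | h
        · exact hij h.symm
        · exact (Finset.notMem_erase j f) h
      have herase : (insert i (f.erase j)).erase i = f.erase j := Finset.erase_insert hifej
      refine ⟨Finset.mem_insert_self i _, hje, ?_, ?_⟩
      · rw [herase, Finset.insert_erase hjf]; exact hfG
      · rw [herase, Finset.insert_erase hjf]; exact hif
  intro hC
  obtain ⟨S, hScard, hSclique⟩ := hC
  by_cases hjS : j ∈ S
  · -- all r-subsets of S are in G
    apply hK
    refine ⟨S, hScard, fun e heS hec => ?_⟩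
    by_contra heG
    have heC := hSclique e heS hec
    obtain ⟨hie, hje, hfG, hif⟩ := factC e heC heG
    set f := insert j (e.erase i) with hfdef
    have hjf : j ∈ f := Finset.mem_insert_self j _
    have hfS : f ⊆ S := by
      intro x hx
      rcases Finset.mem_insert.mp hx with rfl | hx
      · exact hjS
      · exact heS (Finset.mem_of_mem_erase hx)
    have hfcard : f.card = r := by
      have h1 : j ∉ e.erase i := fun h => hje (Finset.mem_of_mem_erase h)
      rw [hfdef, Finset.card_insert_of_notMem h1, Finset.card_erase_of_mem hie, hec]
      omega
    have hfC := hSclique f hfS hfcard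
    -- but f was compressed away
    have hcond : j ∈ f ∧ i ∉ f ∧ insert i (f.erase j) ∉ G := by
      refine ⟨hjf, hif, ?_⟩
      have h1 : j ∉ e.erase i := fun h => hje (Finset.mem_of_mem_erase h)
      rw [hfdef, Finset.erase_insert h1, Finset.insert_erase hie]
      exact heG
    rcases Finset.mem_union.mp hfC with h | h
    · exact (Finset.mem_filter.mp h).2 hcond
    · obtain ⟨g, _, hg⟩ := Finset.mem_image.mp h
      exact hcond.2.1 (hg ▸ Finset.mem_insert_self i _)
  · by_cases hiS : i ∈ S
    · -- build a matching of size t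
      obtain ⟨es, hesG, hies, hjes⟩ := he
      have hescard : es.card = r := (hG es hesG).2
      have hsdiff : S \ es = S \ es.erase j := by
        ext x
        simp only [Finset.mem_sdiff, Finset.mem_erase]
        constructor
        · rintro ⟨hx, hxe⟩; exact ⟨hx, fun h => hxe h.2⟩
        · rintro ⟨hx, hxe⟩
          refine ⟨hx, fun h => hxe ⟨fun hxj => hjS (hxj ▸ hx), h⟩⟩
      have hcard : (t - 1) * r ≤ (S \ es).card := by
        rw [hsdiff]
        have h1 := Finset.le_card_sdiff (es.erase j) S
        rw [Finset.card_erase_of_mem hjes, hescard, hScard] at h1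
        have h2 : (t - 1) * r + r = t * r := by
          have : t - 1 + 1 = t := by omega
          calc (t - 1) * r + r = (t - 1 + 1) * r := by ring
          _ = t * r := by rw [this]
        omega
      obtain ⟨M', hM'c, hM'e, hM'p⟩ :=
        exists_disjoint_r_subsets r (by omega) (t - 1) (S \ es) hcard
      have hM'G : ∀ f ∈ M', f ∈ G := by
        intro f hf
        obtain ⟨hfsub, hfcard⟩ := hM'e f hf
        have hfS : f ⊆ S := hfsub.trans Finset.sdiff_subset
        have hif : i ∉ f := fun h => (Finset.mem_sdiff.mp (hfsub h)).2 hies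
        exact factA f (hSclique f hfS hfcard) hif
      have hesM' : es ∉ M' := by
        intro h
        have hsub : es ⊆ S \ es := (hM'e es h).1
        exact (Finset.mem_sdiff.mp (hsub hies)).2 hies
      apply hM
      refine ⟨insert es M', ?_, ?_, ?_⟩
      · intro f hf
        rcases Finset.mem_insert.mp hf with rfl | hf
        · exact hesG
        · exact hM'G f hf
      · rw [Finset.card_insert_of_notMem hesM', hM'c]; omega
      · intro a ha b hb hab
        simp only [Finset.coe_insert, Set.mem_insert_iff, Finset.mem_coe] at ha hb
        rcases ha with rfl | ha <;> rcases hb with rfl | hb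
        · exact absurd rfl hab
        · exact Finset.disjoint_left.mpr fun x hx hxb =>
            (Finset.mem_sdiff.mp ((hM'e b hb).1 hxb)).2 hx
        · exact Finset.disjoint_left.mpr fun x hx hxb =>
            (Finset.mem_sdiff.mp ((hM'e a ha).1 hx)).2 hxb
        · exact hM'p ha hb hab
    · -- i ∉ S, j ∉ S : S is a clique in G
      apply hK
      refine ⟨S, hScard, fun e heS hec => ?_⟩
      exact factA e (hSclique e heS hec) (fun h => hiS (heS h))
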